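/- Sequential pairwise voting with a fixed agenda does not prevent social disappointment: there exists an agenda and a preference profile (for example, for 3 alternatives with agenda (b, c, a) and 4 voters, where voters 1 and 2 have list (a, b, c), voter 3 has (b, c, a) and voter 4 has (c, b, a)) in which some winning alternative of sequential pairwise voting is ranked last by at least half of the voters. -/

import Mathlib

open Finset

attribute [local instance] Classical.propDecidable

noncomputable section

/-- A preference profile for `n` voters: each voter has a ballot, a list of
alternatives ordered from most preferred (head) to least preferred (last). -/
abbrev Profile (n : ℕ) (A : Type*) := Fin n → List A

variable {A : Type*} [DecidableEq A]

/-- A valid profile: every ballot is a strict linear order on the alternatives,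
i.e. a duplicate-free list containing every alternative. -/
def IsProfile {n : ℕ} (P : Profile n A) : Prop :=
  ∀ i, (P i).Nodup ∧ ∀ a : A, a ∈ P i

/-- The voter with ballot `l` prefers `x` to `y`. -/
def Prefers (l : List A) (x y : A) : Prop := l.idxOf x < l.idxOf y

/-- The number of voters who rank `a` last (at the bottom of their list). -/
def lastCount {n : ℕ} (P : Profile n A) (a : A) : ℕ :=
  (univ.filter fun i => (P i).getLast? = some a).card

/-- The number of voters who rank `a` first (at the top of their list). -/
def firstCount {n : ℕ} (P : Profile n A) (a : A) : ℕ :=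
  (univ.filter fun i => (P i).head? = some a).card

/-- The number of voters preferring `x` to `y`. -/
def prefCount {n : ℕ} (P : Profile n A) (x y : A) : ℕ :=
  (univ.filter fun i => Prefers (P i) x y).card

/-- `x` defeats `y` in a pairwise majority contest: strictly more voters
prefer `x` to `y` than prefer `y` to `x`. -/
def Defeats {n : ℕ} (P : Profile n A) (x y : A) : Prop :=
  prefCount P y x < prefCount P x y

/-- Condorcet's method: the winners are the alternatives defeated by no other alternative. -/
def CondorcetWinners {n : ℕ} (P : Profile n A) : Set A :=
  {a | ∀ b, ¬ Defeats P b a}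

/-- `a` is a Condorcet winner: it is the unique winner of Condorcet's method. -/
def IsCondorcetWinner {n : ℕ} (P : Profile n A) (a : A) : Prop :=
  CondorcetWinners P = {a}

/-- One contest of sequential pairwise voting: the current survivors `S` face the
next agenda alternative `c`; a survivor is eliminated iff `c` defeats it, and `c`
survives iff no member of `S` defeats `c` (a tie eliminates neither). -/
def spvStep {n : ℕ} (P : Profile n A) (S : Finset A) (c : A) : Finset A :=
  (S.filter fun x => ¬ Defeats P c x) ∪
    (if ∀ y ∈ S, ¬ Defeats P y c then {c} else ∅)

/-- Sequential pairwise voting with the fixed agenda: the first agenda alternative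
starts as survivor and the remaining agenda alternatives are faced in order;
the winners are the alternative(s) surviving the final contest. -/
def SPVWinners {n : ℕ} (P : Profile n A) : List A → Finset A
  | [] => ∅
  | c :: rest => rest.foldl (spvStep P) {c}


instance (priority := 2000) myPrefersDec (l : List A) (x y : A) :
    Decidable (Prefers l x y) := Nat.decLt _ _

/-- The example profile: voters 1 and 2 have list (a,b,c), voter 3 has (b,c,a),
voter 4 has (c,b,a), with a=0, b=1, c=2. -/
def P₀ : Profile 4 (Fin 3) := ![[0,1,2],[0,1,2],[1,2,0],[2,1,0]]

lemma pc12 : prefCount P₀ 1 2 = 3 := by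
  rw [prefCount, Finset.card_filter]; simp [Fin.sum_univ_four, P₀, Prefers]
lemma pc21 : prefCount P₀ 2 1 = 1 := by
  rw [prefCount, Finset.card_filter]; simp [Fin.sum_univ_four, P₀, Prefers]
lemma pc01 : prefCount P₀ 0 1 = 2 := by
  rw [prefCount, Finset.card_filter]; simp [Fin.sum_univ_four, P₀, Prefers]
lemma pc10 : prefCount P₀ 1 0 = 2 := by
  rw [prefCount, Finset.card_filter]; simp [Fin.sum_univ_four, P₀, Prefers]

lemma nd21 : ¬ Defeats P₀ 2 1 := by simp [Defeats, pc12, pc21]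
lemma d12 : Defeats P₀ 1 2 := by simp [Defeats, pc12, pc21]
lemma nd01 : ¬ Defeats P₀ 0 1 := by simp [Defeats, pc01, pc10]
lemma nd10 : ¬ Defeats P₀ 1 0 := by simp [Defeats, pc01, pc10]

lemma spv_eq : SPVWinners P₀ [1,2,0] = {1} ∪ {0} := by
  show spvStep P₀ (spvStep P₀ {1} 2) 0 = _
  have h1 : spvStep P₀ {1} 2 = {1} := by
    rw [spvStep, Finset.filter_singleton, if_pos nd21, if_neg]
    · simp
    · simp [d12]
  rw [h1, spvStep, Finset.filter_singleton, if_pos nd01, if_pos]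
  simp [nd10]

lemma lc0 : lastCount P₀ 0 = 2 := by
  have h0 : (P₀ 0).getLast? = some 2 := by decide
  have h1 : (P₀ 1).getLast? = some 2 := by decide
  have h2 : (P₀ 2).getLast? = some 0 := by decide
  have h3 : (P₀ 3).getLast? = some 0 := by decide
  rw [lastCount, Finset.card_filter, Fin.sum_univ_four, if_neg, if_neg,
    if_pos h2, if_pos h3] <;> simp [h0, h1]

/-- Sequential pairwise voting with a fixed agenda does not prevent
social disappointment: there are an agenda and a profile (3 alternatives, 4 voters)
in which some sequential-pairwise-voting winner is ranked last by at least half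
of the voters. -/
theorem spv_not_nonSD :
    ∃ (agenda : List (Fin 3)) (P : Profile 4 (Fin 3)),
      agenda.Nodup ∧ (∀ x : Fin 3, x ∈ agenda) ∧ IsProfile P ∧
      ∃ a ∈ SPVWinners P agenda, 4 ≤ 2 * lastCount P a := by
  refine ⟨[1,2,0], P₀, by decide, by decide, ?_, 0, ?_, ?_⟩
  · intro i
    fin_cases i <;> exact ⟨by decide, by decide⟩
  · rw [spv_eq]; simp
  · rw [lc0]
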